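/- Let (σ_i)_{i ∈ Fin n} be a maximal CDP family whose underlying set is closed under composition (for all i, j there exists k with σ_i ∘ σ_j = σ_k), and let (E_j)_{j ∈ Fin n} be its conjugated family. Then σ_i ∘ E_j = E_j ∘ σ_i for all i, j ∈ Fin n, even when the family (σ_i) is not commutative. -/
import Mathlib

/-- For a maximal CDP family closed under composition, each member commutes with each
member of the conjugated family. -/
theorem cdp_commutes_with_conjugated {n : ℕ} [NeZero n] (σ : Fin n → Equiv.Perm (Fin n))
    (hcdp : ∀ i j, i ≠ j → ∀ k, σ i k ≠ σ j k)
    (hnorm : ∀ i, σ i 0 = i)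
    (hclosed : ∀ i j, ∃ k, σ i * σ j = σ k)
    (E : Fin n → Equiv.Perm (Fin n)) (hE : ∀ j k, E j (σ k j) = k) :
    ∀ i j, σ i * E j = E j * σ i := by
  intro i j
  ext x
  have hinj : Function.Injective (fun k => σ k j) := by
    intro a b hab
    by_contra h
    exact hcdp a b h j hab
  obtain ⟨k, hk⟩ := Finite.injective_iff_surjective.mp hinj x
  obtain ⟨m, hm⟩ := hclosed i k
  have hm0 : m = σ i k := by
    have h0 := congrArg (fun e => e 0) hm
    simp [Equiv.Perm.mul_apply, hnorm] at h0
    exact h0.symm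
  have hj : σ i (σ k j) = σ m j := by
    have := congrArg (fun e => e j) hm
    simpa using this
  simp only [Equiv.Perm.mul_apply, ← hk]
  rw [hE, hj, hE, hm0]
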